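/- The face set of the neighborhood complex of KG_{2,k} is the disjoint union of the face set of the neighborhood complex of S_{2,k} and the sets X_{i,i+1} for i = 1, ..., k+4. -/

import Mathlib

open Finset

/-- Potential vertices of `KG_{2,k}`: finite subsets of `[k+4]` (modelled as `ZMod (k+4)`);
actual vertices are those of cardinality 2. -/
abbrev Vtx (k : ℕ) := Finset (ZMod (k + 4))

/-- `S_σ`, the union of the pairs in `σ`. -/
def Sσ {k : ℕ} (σ : Finset (Vtx k)) : Finset (ZMod (k + 4)) := σ.sup id

/-- `C_σ = [k+4] \ S_σ`. -/
def Cσ {k : ℕ} (σ : Finset (Vtx k)) : Finset (ZMod (k + 4)) := Finset.univ \ σ.sup id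

/-- Adjacency in the Kneser graph `KG_{2,k}`: two 2-subsets that are disjoint. -/
def kgAdj {k : ℕ} (u v : Vtx k) : Prop := u.card = 2 ∧ v.card = 2 ∧ Disjoint u v

/-- A stable vertex: a 2-subset containing no two cyclically consecutive elements. -/
def IsStable {k : ℕ} (u : Vtx k) : Prop := u.card = 2 ∧ ∀ a ∈ u, a + 1 ∉ u

/-- Adjacency in `S_{2,k}`: a Kneser edge at least one of whose endpoints is stable. -/
def sAdj {k : ℕ} (u v : Vtx k) : Prop := kgAdj u v ∧ (IsStable u ∨ IsStable v)

/-- `σ` is a face of the neighborhood complex `N(KG_{2,k})`: the members of `σ`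
have a common neighbor in `KG_{2,k}`. -/
def kgFace {k : ℕ} (σ : Finset (Vtx k)) : Prop :=
  ∃ v : Vtx k, v.card = 2 ∧ ∀ u ∈ σ, kgAdj v u

/-- `σ` is a face of the neighborhood complex `N(S_{2,k})`. -/
def sFace {k : ℕ} (σ : Finset (Vtx k)) : Prop :=
  ∃ v : Vtx k, v.card = 2 ∧ ∀ u ∈ σ, sAdj v u

/-- `X_{i,i+1}`: subsets of the `KG_{2,k}`-neighborhood of `{i,i+1}` that are not
faces of `N(S_{2,k})`. -/
def Xset {k : ℕ} (i : ZMod (k + 4)) (σ : Finset (Vtx k)) : Prop :=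
  (∀ u ∈ σ, kgAdj ({i, i + 1} : Vtx k) u) ∧ ¬ sFace σ

/-- The face set of `N(KG_{2,k})` is the disjoint union of the face
set of `N(S_{2,k})` and the sets `X_{i,i+1}`, `i ∈ [k+4]`. -/
theorem faces_partition {k : ℕ} (σ : Finset (Vtx k)) :
    (kgFace σ ↔ sFace σ ∨ ∃ i : ZMod (k + 4), Xset i σ) ∧
    ¬ (sFace σ ∧ ∃ i : ZMod (k + 4), Xset i σ) ∧
    (∀ i i' : ZMod (k + 4), Xset i σ → Xset i' σ → i = i') := by
  haveI : NeZero (k + 4) := ⟨by omega⟩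
  have hval : ∀ m : ℕ, m < k + 4 → ((m : ZMod (k + 4)) = 0 → m = 0) := by
    intro m hm h
    have := ZMod.val_cast_of_lt hm
    rw [h] at this
    simpa using this.symm
  have h1 : (1 : ZMod (k + 4)) ≠ 0 := by
    intro h; exact one_ne_zero (hval 1 (by omega) (by exact_mod_cast h))
  have h2 : (2 : ZMod (k + 4)) ≠ 0 := by
    intro h; exact two_ne_zero (hval 2 (by omega) (by exact_mod_cast h))
  have h3 : (3 : ZMod (k + 4)) ≠ 0 := by
    intro h; exact three_ne_zero (hval 3 (by omega) (by exact_mod_cast h))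
  have hadd : ∀ x : ZMod (k + 4), ∀ c : ZMod (k + 4), c ≠ 0 → x + c ≠ x := by
    intro x c hc h
    exact hc (by linear_combination h)
  have hadd2 : ∀ x : ZMod (k + 4), ∀ c d : ZMod (k + 4), c ≠ d → x + c ≠ x + d := by
    intro x c d hcd h
    exact hcd (by linear_combination h)
  have mkstable : ∀ x y : ZMod (k + 4), x ≠ y → x + 1 ≠ y → y + 1 ≠ x →
      IsStable ({x, y} : Vtx k) := by
    intro x y hxy hx1 hy1
    refine ⟨Finset.card_pair hxy, ?_⟩
    intro a ha
    simp only [Finset.mem_insert, Finset.mem_singleton] at ha ⊢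
    rcases ha with rfl | rfl
    · push_neg
      exact ⟨hadd a 1 h1, hx1⟩
    · push_neg
      exact ⟨hy1, hadd a 1 h1⟩
  refine ⟨⟨?_, ?_⟩, ?_, ?_⟩
  · -- forward
    rintro ⟨v, hv2, hvadj⟩
    by_cases hs : sFace σ
    · exact Or.inl hs
    by_cases hstab : IsStable v
    · exact absurd ⟨v, hv2, fun u hu => ⟨hvadj u hu, Or.inl hstab⟩⟩ hs
    · unfold IsStable at hstab
      push_neg at hstab
      obtain ⟨a, ha, ha1⟩ := hstab hv2
      have hsub : ({a, a + 1} : Vtx k) ⊆ v := by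
        intro x hx
        simp only [Finset.mem_insert, Finset.mem_singleton] at hx
        rcases hx with rfl | rfl <;> assumption
      have hcard : ({a, a + 1} : Vtx k).card = 2 :=
        Finset.card_pair (fun h => hadd a 1 h1 h.symm)
      have hv : ({a, a + 1} : Vtx k) = v :=
        Finset.eq_of_subset_of_card_le hsub (by rw [hv2, hcard])
      refine Or.inr ⟨a, fun u hu => ?_, hs⟩
      rw [hv]; exact hvadj u hu
  · -- backward
    rintro (⟨v, hv2, h⟩ | ⟨i, hX, _⟩)
    · exact ⟨v, hv2, fun u hu => (h u hu).1⟩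
    · exact ⟨{i, i + 1}, Finset.card_pair (fun h => hadd i 1 h1 h.symm), hX⟩
  · -- disjoint
    rintro ⟨hs, i, _, hns⟩
    exact hns hs
  · -- uniqueness
    rintro i i' ⟨hXi, hns⟩ ⟨hXi', -⟩
    by_contra hne
    apply hns
    -- every u in σ avoids i, i+1, i', i'+1
    have havoid : ∀ u ∈ σ, u.card = 2 ∧ i ∉ u ∧ i + 1 ∉ u ∧ i' ∉ u ∧ i' + 1 ∉ u := by
      intro u hu
      obtain ⟨-, hc, hd⟩ := hXi u hu
      obtain ⟨-, -, hd'⟩ := hXi' u hu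
      rw [Finset.disjoint_left] at hd hd'
      exact ⟨hc, hd (by simp), hd (by simp), hd' (by simp), hd' (by simp)⟩
    by_cases hA : i' = i + 1
    · -- v = {i, i+2}
      subst hA
      refine ⟨{i, i + 1 + 1}, Finset.card_pair ?_, ?_⟩
      · intro h; exact hadd i (1 + 1) (by rw [one_add_one_eq_two]; exact h2) (by linear_combination -h)
      · intro u hu
        obtain ⟨hc, n1, n2, n3, n4⟩ := havoid u hu
        have hdisj : Disjoint ({i, i + 1 + 1} : Vtx k) u := by
          rw [Finset.disjoint_left]
          intro x hx
          simp only [Finset.mem_insert, Finset.mem_singleton] at hx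
          rcases hx with rfl | rfl
          · exact n1
          · exact n4
        refine ⟨⟨Finset.card_pair ?_, hc, hdisj⟩, Or.inl (mkstable _ _ ?_ ?_ ?_)⟩
        · intro h; exact hadd i (1 + 1) (by rw [one_add_one_eq_two]; exact h2) (by linear_combination -h)
        · intro h; exact hadd i (1 + 1) (by rw [one_add_one_eq_two]; exact h2) (by linear_combination -h)
        · intro h; exact hadd (i + 1) 1 h1 h.symm
        · intro h; exact hadd i 3 h3 (by linear_combination h)
    by_cases hB : i = i' + 1
    · -- v = {i', i'+2}
      subst hB
      refine ⟨{i', i' + 1 + 1}, Finset.card_pair ?_, ?_⟩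
      · intro h; exact hadd i' (1 + 1) (by rw [one_add_one_eq_two]; exact h2) (by linear_combination -h)
      · intro u hu
        obtain ⟨hc, n1, n2, n3, n4⟩ := havoid u hu
        have hdisj : Disjoint ({i', i' + 1 + 1} : Vtx k) u := by
          rw [Finset.disjoint_left]
          intro x hx
          simp only [Finset.mem_insert, Finset.mem_singleton] at hx
          rcases hx with rfl | rfl
          · exact n3
          · exact n2
        refine ⟨⟨Finset.card_pair ?_, hc, hdisj⟩, Or.inl (mkstable _ _ ?_ ?_ ?_)⟩
        · intro h; exact hadd i' (1 + 1) (by rw [one_add_one_eq_two]; exact h2) (by linear_combination -h)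
        · intro h; exact hadd i' (1 + 1) (by rw [one_add_one_eq_two]; exact h2) (by linear_combination -h)
        · intro h; exact hadd (i' + 1) 1 h1 h.symm
        · intro h; exact hadd i' 3 h3 (by linear_combination h)
    · -- v = {i, i'}
      refine ⟨{i, i'}, Finset.card_pair hne, ?_⟩
      intro u hu
      obtain ⟨hc, n1, n2, n3, n4⟩ := havoid u hu
      have hdisj : Disjoint ({i, i'} : Vtx k) u := by
        rw [Finset.disjoint_left]
        intro x hx
        simp only [Finset.mem_insert, Finset.mem_singleton] at hx
        rcases hx with rfl | rfl
        · exact n1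
        · exact n3
      exact ⟨⟨Finset.card_pair hne, hc, hdisj⟩,
        Or.inl (mkstable _ _ hne (fun h => hA h.symm) (fun h => hB h.symm))⟩
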